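/- Let m_N(θ) be the expected hitting time of {−2N,2N} for the alternating-wells random walk (explicit formula as in the paper). Then h_N(θ) = N^{−1} log m_N(θ) converges pointwise on (0,1)\{1/2} to h(θ) = |log((1−θ)/θ)|, and the function m_N is symmetric: m_N(θ) = m_N(1−θ) for all θ ∈ (0,1). -/

import Mathlib

open Filter Topology

/-- Expected hitting time of `{-2N, 2N}` for the alternating-wells walk. -/
noncomputable def mAW (N : ℕ) (θ : ℝ) : ℝ :=
  if θ = 1 / 2 then 4 * (N : ℝ) ^ 2 else
    (2 * θ * (1 - θ) / (1 - 2 * θ) ^ 2) / (θ * (θ / (1 - θ)) ^ N + (1 - θ))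
      * (1 - (θ / (1 - θ)) ^ N) * (((1 - θ) / θ) ^ N - (θ / (1 - θ)) ^ N)

lemma aux_symm (C θ a b : ℝ) (ha : a ≠ 0) (hb : b ≠ 0)
    (hd : θ * a + (1 - θ) * b ≠ 0) :
    C / (θ * (a / b) + (1 - θ)) * (1 - a / b) * (b / a - a / b)
      = C / ((1 - θ) * (b / a) + θ) * (1 - b / a) * (a / b - b / a) := by
  have e1 : θ * (a / b) + (1 - θ) = (θ * a + (1 - θ) * b) / b := by
    field_simp
  have e2 : (1 - θ) * (b / a) + θ = (θ * a + (1 - θ) * b) / a := by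
    field_simp; ring
  rw [e1, e2, div_div_eq_mul_div, div_div_eq_mul_div]
  field_simp
  ring

lemma mAW_symm (N : ℕ) (θ : ℝ) (h0 : 0 < θ) (h1 : θ < 1) :
    mAW N θ = mAW N (1 - θ) := by
  by_cases hθ : θ = 1/2
  · norm_num [mAW, hθ]
  · have hθ' : (1:ℝ) - θ ≠ 1/2 := fun h => hθ (by linarith)
    have h0' : (0:ℝ) < 1 - θ := by linarith
    have ha : θ ^ N ≠ 0 := by positivity
    have hb : ((1:ℝ) - θ) ^ N ≠ 0 := by positivity
    have hd : θ * θ ^ N + (1 - θ) * (1 - θ) ^ N ≠ 0 := by positivity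
    simp only [mAW, if_neg hθ, if_neg hθ', div_pow]
    have e1 : (1:ℝ) - (1 - θ) = θ := by ring
    rw [e1]
    have eC : 2 * (1 - θ) * θ / (1 - 2 * (1 - θ)) ^ 2
        = 2 * θ * (1 - θ) / (1 - 2 * θ) ^ 2 := by
      rw [show ((1:ℝ) - 2 * (1 - θ)) ^ 2 = (1 - 2 * θ) ^ 2 by ring]; ring
    rw [eC]
    exact aux_symm _ θ (θ ^ N) ((1 - θ) ^ N) ha hb hd

lemma mAW_tendsto_lt (θ : ℝ) (h0 : 0 < θ) (h2 : θ < 1/2) :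
    Tendsto (fun N : ℕ => (N : ℝ)⁻¹ * Real.log (mAW N θ)) atTop
      (𝓝 |Real.log ((1 - θ) / θ)|) := by
  have h1 : θ < 1 := by linarith
  have h0' : (0:ℝ) < 1 - θ := by linarith
  have hθ : θ ≠ 1/2 := ne_of_lt h2
  set r : ℝ := θ / (1 - θ) with hr_def
  have hr0 : 0 < r := div_pos h0 h0'
  have hr1 : r < 1 := (div_lt_one h0').mpr (by linarith)
  have hrinv : (1 - θ) / θ = r⁻¹ := by
    rw [hr_def, inv_div]
  set C : ℝ := 2 * θ * (1 - θ) / (1 - 2 * θ) ^ 2 with hC_def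
  have hC : 0 < C := by
    apply div_pos (by nlinarith) (by nlinarith [sq_nonneg (1 - 2*θ)]; )
  set g : ℕ → ℝ := fun N => C / (θ * r ^ N + (1 - θ)) * (1 - r ^ N) * (1 - r ^ (2 * N))
    with hg_def
  have hfact : ∀ N : ℕ, mAW N θ = (r⁻¹) ^ N * g N := by
    intro N
    have hden : θ * r ^ N + (1 - θ) ≠ 0 := by positivity
    have hrN : r ^ N ≠ 0 := by positivity
    simp only [mAW, if_neg hθ, hg_def, hrinv, ← hr_def]
    rw [inv_pow]
    have : (r ^ N)⁻¹ - r ^ N = (r ^ N)⁻¹ * (1 - r ^ (2 * N)) := by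
      rw [mul_sub, mul_one, pow_mul]
      rw [show (r^N)⁻¹ * (r^2)^N = (r^N)⁻¹ * (r^N * r^N) by ring_nf]
      rw [inv_mul_cancel_left₀ hrN]
    rw [this]; ring
  have hrlim : Tendsto (fun N : ℕ => r ^ N) atTop (𝓝 0) :=
    tendsto_pow_atTop_nhds_zero_of_lt_one hr0.le hr1
  have hr2lim : Tendsto (fun N : ℕ => r ^ (2 * N)) atTop (𝓝 0) := by
    simpa [pow_mul] using
      tendsto_pow_atTop_nhds_zero_of_lt_one (by positivity : (0:ℝ) ≤ r ^ 2)
        (by nlinarith : r ^ 2 < 1)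
  have hglim : Tendsto g atTop (𝓝 (C / (1 - θ))) := by
    have := (((tendsto_const_nhds (x := C)).div
        (((tendsto_const_nhds (x := θ)).mul hrlim).add
          (tendsto_const_nhds (x := (1:ℝ) - θ))) (by simpa using ne_of_gt h0')).mul
        ((tendsto_const_nhds (x := (1:ℝ))).sub hrlim)).mul
        ((tendsto_const_nhds (x := (1:ℝ))).sub hr2lim)
    simpa using this
  have hL : 0 < C / (1 - θ) := div_pos hC h0'
  have hloglim : Tendsto (fun N => Real.log (g N)) atTop (𝓝 (Real.log (C / (1 - θ)))) :=
    ((Real.continuousAt_log (ne_of_gt hL)).tendsto.comp hglim)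
  have hinv : Tendsto (fun N : ℕ => (N : ℝ)⁻¹) atTop (𝓝 0) :=
    tendsto_inv_atTop_zero.comp tendsto_natCast_atTop_atTop
  have hmain : Tendsto (fun N : ℕ => Real.log r⁻¹ + (N : ℝ)⁻¹ * Real.log (g N)) atTop
      (𝓝 (Real.log r⁻¹)) := by
    have := (tendsto_const_nhds (x := Real.log r⁻¹)).add (hinv.mul hloglim)
    simpa using this
  have habs : |Real.log ((1 - θ) / θ)| = Real.log r⁻¹ := by
    rw [hrinv]
    exact abs_of_pos (Real.log_pos (by rw [one_lt_inv_iff₀]; exact ⟨hr0, hr1⟩))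
  rw [habs]
  apply hmain.congr'
  filter_upwards [eventually_ge_atTop 1] with N hN
  have hNpos : (0:ℝ) < N := by exact_mod_cast hN
  have hgpos : 0 < g N := by
    have h1' : r ^ N < 1 := pow_lt_one₀ hr0.le hr1 (by omega)
    have h2' : r ^ (2*N) < 1 := pow_lt_one₀ hr0.le hr1 (by omega)
    have : 0 < θ * r ^ N + (1 - θ) := by positivity
    apply mul_pos (mul_pos (div_pos hC this) (by linarith)) (by linarith)
  rw [hfact N, Real.log_mul (by positivity) (ne_of_gt hgpos), Real.log_pow]
  field_simp

/-- Pointwise convergence of `N⁻¹ log m_N` to `|log((1-θ)/θ)|` on `(0,1)\{1/2}`,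
and symmetry `m_N(θ) = m_N(1-θ)` on `(0,1)`. -/
theorem stmt12 :
    (∀ θ : ℝ, 0 < θ → θ < 1 → θ ≠ 1 / 2 →
      Tendsto (fun N : ℕ => (N : ℝ)⁻¹ * Real.log (mAW N θ)) atTop
        (𝓝 |Real.log ((1 - θ) / θ)|)) ∧
    (∀ N : ℕ, ∀ θ : ℝ, 0 < θ → θ < 1 → mAW N θ = mAW N (1 - θ)) := by
  constructor
  · intro θ h0 h1 hθ
    rcases lt_or_gt_of_ne hθ with h2 | h2
    · exact mAW_tendsto_lt θ h0 h2
    · have h0' : 0 < 1 - θ := by linarith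
      have h2' : 1 - θ < 1/2 := by linarith
      have := mAW_tendsto_lt (1 - θ) h0' h2'
      have heq : ∀ N : ℕ, mAW N θ = mAW N (1 - θ) := fun N => mAW_symm N θ h0 h1
      have habs : |Real.log ((1 - θ) / θ)| = |Real.log ((1 - (1 - θ)) / (1 - θ))| := by
        rw [show (1:ℝ) - (1 - θ) = θ by ring,
          show (1 - θ) / θ = (θ / (1 - θ))⁻¹ from (inv_div _ _).symm,
          Real.log_inv, abs_neg]
      rw [habs]
      exact this.congr fun N => by rw [heq N]
  · exact fun N θ h0 h1 => mAW_symm N θ h0 h1
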